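/- Let X, Λ, S be mutually independent random variables with X exponentially distributed with rate λ₁, Λ exponentially distributed with rate λ−λ₁ (0 < λ₁ < λ), and S a nonnegative random variable with P(S > 0) > 0. Then for every real s < λ, the conditional moment generating function of Λ given the event {Λ < min(S,X)} satisfies E[e^{sΛ} · 1_{Λ < min(S,X)}] / P(Λ < min(S,X)) = λ(1 − P_{λ−s}) / ((λ−s)(1 − P_λ)), where P_x := E[e^{−xS}]. -/

import Mathlib

open MeasureTheory ProbabilityTheory Real
open scoped ENNReal NNReal

lemma measurable_expPDF' (r : ℝ) : Measurable (exponentialPDF r) :=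
  (measurable_exponentialPDFReal r).ennreal_ofReal

lemma expMeasure_Iio_zero (r : ℝ) : expMeasure r (Set.Iio 0) = 0 := by
  rw [expMeasure, gammaMeasure, withDensity_apply _ measurableSet_Iio]
  exact lintegral_exponentialPDF_of_nonpos le_rfl

lemma expMeasure_Ioi {r : ℝ} (hr : 0 < r) {a : ℝ} (ha : 0 ≤ a) :
    expMeasure r (Set.Ioi a) = ENNReal.ofReal (Real.exp (-(r * a))) := by
  haveI := isProbabilityMeasure_expMeasure hr
  have hIic : expMeasure r (Set.Iic a) = ENNReal.ofReal (1 - Real.exp (-(r * a))) := by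
    rw [expMeasure, gammaMeasure, withDensity_apply _ measurableSet_Iic]
    have h := lintegral_exponentialPDF_eq_antiDeriv hr a
    rw [if_pos ha] at h
    exact h
  have h1 : Real.exp (-(r * a)) ≤ 1 := exp_le_one_iff.mpr (by nlinarith)
  rw [show Set.Ioi a = (Set.Iic a)ᶜ from (Set.compl_Iic).symm,
    measure_compl measurableSet_Iic (measure_ne_top _ _), hIic, measure_univ,
    ← ENNReal.ofReal_one, ← ENNReal.ofReal_sub _ (by linarith)]
  norm_num

lemma integral_exp_mul_real {k : ℝ} (hk : k ≠ 0) (t : ℝ) :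
    ∫ a in (0:ℝ)..t, Real.exp (k * a) = (Real.exp (k * t) - 1) / k := by
  have hder : ∀ x ∈ Set.uIcc (0:ℝ) t, HasDerivAt (fun a => Real.exp (k * a) / k)
      (Real.exp (k * x)) x := by
    intro x _
    have h := ((hasDerivAt_id x).const_mul k).exp
    simpa [mul_comm, hk, mul_div_assoc] using h.div_const k
  have hint : IntervalIntegrable (fun a => Real.exp (k * a)) volume 0 t :=
    (Real.continuous_exp.comp (continuous_const.mul continuous_id)).intervalIntegrable 0 t
  rw [intervalIntegral.integral_eq_sub_of_hasDerivAt hder hint]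
  simp [sub_div]

lemma expMeasure_lintegral_Iio {r c t : ℝ} (hr : 0 < r) (hc : c < r) (ht : 0 ≤ t) :
    ∫⁻ a in Set.Iio t, ENNReal.ofReal (Real.exp (c * a)) ∂(expMeasure r)
      = ENNReal.ofReal (r / (r - c) * (1 - Real.exp (-((r - c) * t)))) := by
  have hmeas : Measurable fun a : ℝ => ENNReal.ofReal (Real.exp (c * a)) :=
    (measurable_exp.comp (measurable_const.mul measurable_id)).ennreal_ofReal
  have h0 : (expMeasure r).restrict (Set.Iio t)
      = (volume.restrict (Set.Iio t)).withDensity (exponentialPDF r) := by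
    rw [expMeasure, gammaMeasure]
    exact restrict_withDensity measurableSet_Iio _
  rw [h0, lintegral_withDensity_eq_lintegral_mul _ (measurable_expPDF' r) hmeas]
  have hsplit : Set.Iio t = Set.Iio 0 ∪ Set.Ico 0 t := (Set.Iio_union_Ico_eq_Iio ht).symm
  have hdisj : Disjoint (Set.Iio (0:ℝ)) (Set.Ico 0 t) := by
    apply Set.disjoint_left.mpr; rintro x hx ⟨hx2, -⟩; exact absurd hx2 (not_le.mpr hx)
  rw [hsplit, lintegral_union measurableSet_Ico hdisj]
  have hzero : ∫⁻ a in Set.Iio (0:ℝ), (exponentialPDF r * fun a => ENNReal.ofReal (rexp (c * a))) a = 0 := by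
    have := setLIntegral_congr_fun_ae (μ := volume) (f := exponentialPDF r * fun a => ENNReal.ofReal (rexp (c * a)))
      (g := fun _ => (0:ℝ≥0∞)) measurableSet_Iio (ae_of_all _ (fun a (ha : a < 0) => by
        simp [exponentialPDF_of_neg ha]))
    rw [this]; simp
  rw [hzero, zero_add]
  have hcongr : ∫⁻ a in Set.Ico 0 t, (exponentialPDF r * fun a => ENNReal.ofReal (rexp (c * a))) a
      = ∫⁻ a in Set.Ico 0 t, ENNReal.ofReal (r * rexp ((c - r) * a)) := by
    apply setLIntegral_congr_fun_ae measurableSet_Ico (ae_of_all _ (fun a (ha : a ∈ Set.Ico 0 t) => ?_))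
    rw [Pi.mul_apply, exponentialPDF_of_nonneg ha.1, ← ENNReal.ofReal_mul (by positivity)]
    congr 1
    rw [mul_assoc, ← Real.exp_add]
    ring_nf
  rw [hcongr]
  have hInt : IntegrableOn (fun a => r * rexp ((c - r) * a)) (Set.Ico 0 t) volume := by
    apply (Continuous.integrableOn_Icc (continuous_const.mul
      (Real.continuous_exp.comp (continuous_const.mul continuous_id)))).mono_set Set.Ico_subset_Icc_self
  rw [← ofReal_integral_eq_lintegral_ofReal hInt (ae_of_all _ (fun a => by positivity))]
  congr 1
  have h1 : ∫ a in Set.Ico (0:ℝ) t, r * rexp ((c - r) * a) = ∫ a in (0:ℝ)..t, r * rexp ((c - r) * a) := by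
    rw [intervalIntegral.integral_of_le ht, integral_Ico_eq_integral_Ioo, integral_Ioc_eq_integral_Ioo]
  rw [h1, intervalIntegral.integral_const_mul, integral_exp_mul_real (by linarith) t]
  have hrc : r - c ≠ 0 := by linarith
  rw [show (c - r) * t = -((r - c) * t) by ring]
  have hrc2 : c - r ≠ 0 := by linarith
  field_simp [hrc, hrc2]
  ring

lemma key_lemma {Ω : Type*} [MeasurableSpace Ω] (μ : Measure Ω) [IsProbabilityMeasure μ]
    (X Λ S : Ω → ℝ) (hXm : Measurable X) (hΛm : Measurable Λ) (hSm : Measurable S)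
    (hSnn : ∀ᵐ ω ∂μ, 0 ≤ S ω)
    (l l1 : ℝ) (hl1 : 0 < l1) (hl : l1 < l)
    (hX : Measure.map X μ = expMeasure l1)
    (hΛ : Measure.map Λ μ = expMeasure (l - l1))
    (hInd : iIndepFun ![X, Λ, S] μ)
    (s : ℝ) (hs : s < l) :
    ∫ ω in {ω | Λ ω < min (S ω) (X ω)}, Real.exp (s * Λ ω) ∂μ
      = (l - l1) / (l - s) * (1 - ∫ ω, Real.exp (-(l - s) * S ω) ∂μ) := by
  have hll1 : (0:ℝ) < l - l1 := by linarith
  have hls : (0:ℝ) < l - s := by linarith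
  haveI h1 : IsProbabilityMeasure (expMeasure l1) := isProbabilityMeasure_expMeasure hl1
  haveI h2 : IsProbabilityMeasure (expMeasure (l - l1)) := isProbabilityMeasure_expMeasure hll1
  haveI : IsProbabilityMeasure (μ.map Λ) := by rw [hΛ]; infer_instance
  haveI : IsProbabilityMeasure (μ.map S) := Measure.isProbabilityMeasure_map hSm.aemeasurable
  haveI : IsProbabilityMeasure (μ.map X) := by rw [hX]; infer_instance
  set A := {ω | Λ ω < min (S ω) (X ω)} with hAdef
  have hA : MeasurableSet A := measurableSet_lt hΛm (hSm.min hXm)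
  have hm : ∀ i, Measurable (![X, Λ, S] i) := by
    intro i; fin_cases i <;> simpa using ‹_›
  -- independence map facts
  have hWX : IndepFun (fun ω => (Λ ω, S ω)) X μ := by
    have h := hInd.indepFun_prodMk hm 1 2 0 (by decide) (by decide)
    simpa using h
  have hΛS : IndepFun Λ S μ := by
    have h := hInd.indepFun (show (1 : Fin 3) ≠ 2 by decide)
    simpa using h
  have hmapW : μ.map (fun ω => (Λ ω, S ω)) = (μ.map Λ).prod (μ.map S) :=
    (indepFun_iff_map_prod_eq_prod_map_map hΛm.aemeasurable hSm.aemeasurable).mp hΛS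
  have hmapV : μ.map (fun ω => ((Λ ω, S ω), X ω))
      = (μ.map (fun ω => (Λ ω, S ω))).prod (μ.map X) :=
    (indepFun_iff_map_prod_eq_prod_map_map (hΛm.prodMk hSm).aemeasurable hXm.aemeasurable).mp hWX
  -- the ENNReal-valued integrand on the product space
  set G : ℝ × ℝ → ℝ≥0∞ :=
    fun p => Set.indicator {p : ℝ × ℝ | p.1 < p.2} (fun p => ENNReal.ofReal (Real.exp (s * p.1))) p
    with hGdef
  set F : (ℝ × ℝ) × ℝ → ℝ≥0∞ :=
    fun q => G q.1 * Set.indicator {q : (ℝ × ℝ) × ℝ | q.1.1 < q.2} (fun _ => (1:ℝ≥0∞)) q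
    with hFdef
  have hGmeas : Measurable G :=
    Measurable.indicator ((measurable_exp.comp (measurable_const.mul measurable_fst)).ennreal_ofReal)
      (measurableSet_lt measurable_fst measurable_snd)
  have hFmeas : Measurable F := by
    apply Measurable.mul (hGmeas.comp measurable_fst)
    exact measurable_const.indicator
      (measurableSet_lt (measurable_fst.comp measurable_fst) measurable_snd)
  -- step 1 : set integral to lintegral
  have step1 : ∫ ω in A, Real.exp (s * Λ ω) ∂μ
      = (∫⁻ ω in A, ENNReal.ofReal (Real.exp (s * Λ ω)) ∂μ).toReal := by
    rw [integral_eq_lintegral_of_nonneg_ae (ae_of_all _ (fun ω => (exp_pos _).le))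
      (measurable_exp.comp (hΛm.const_mul s)).aestronglyMeasurable.restrict]
  -- step 2 : pointwise identification with F ∘ V
  have step2 : ∫⁻ ω in A, ENNReal.ofReal (Real.exp (s * Λ ω)) ∂μ
      = ∫⁻ ω, F ((Λ ω, S ω), X ω) ∂μ := by
    rw [← lintegral_indicator hA]
    apply lintegral_congr fun ω => ?_
    simp only [Set.indicator_apply, Set.mem_setOf_eq, hAdef, hFdef, hGdef, lt_min_iff]
    by_cases h1 : Λ ω < S ω <;> by_cases h2 : Λ ω < X ω <;> simp [h1, h2]
  -- step 3 : transfer to the product measure and integrate out X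
  have step3 : ∫⁻ ω, F ((Λ ω, S ω), X ω) ∂μ
      = ∫⁻ w, G w * expMeasure l1 (Set.Ioi w.1) ∂((μ.map Λ).prod (μ.map S)) := by
    rw [← lintegral_map hFmeas ((hΛm.prodMk hSm).prodMk hXm), hmapV, hmapW, hX,
      lintegral_prod _ hFmeas.aemeasurable]
    apply lintegral_congr fun w => ?_
    have hfx : ∀ x, F (w, x) = G w * Set.indicator (Set.Ioi w.1) (fun _ => (1:ℝ≥0∞)) x := by
      intro x
      simp only [hFdef, Set.indicator_apply, Set.mem_setOf_eq, Set.mem_Ioi]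
    simp only [hfx]
    rw [lintegral_const_mul _ (measurable_const.indicator measurableSet_Ioi),
      lintegral_indicator measurableSet_Ioi, setLIntegral_one]
  -- step 4 : a.e. rewrite of the X tail probability and merge exponentials
  have haeΛ : ∀ᵐ w ∂((μ.map Λ).prod (μ.map S)), 0 ≤ w.1 := by
    rw [ae_iff]
    have hset : {w : ℝ × ℝ | ¬ 0 ≤ w.1} = Set.Iio 0 ×ˢ Set.univ := by
      ext w; simp [not_le]
    rw [hset, Measure.prod_prod, hΛ, expMeasure_Iio_zero, zero_mul]
  have step4 : ∫⁻ w, G w * expMeasure l1 (Set.Ioi w.1) ∂((μ.map Λ).prod (μ.map S))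
      = ∫⁻ w, Set.indicator {p : ℝ × ℝ | p.1 < p.2}
          (fun p => ENNReal.ofReal (Real.exp ((s - l1) * p.1))) w ∂((μ.map Λ).prod (μ.map S)) := by
    apply lintegral_congr_ae (haeΛ.mono fun w hw => ?_)
    rw [expMeasure_Ioi hl1 hw]
    simp only [hGdef, Set.indicator_apply, Set.mem_setOf_eq]
    split_ifs with h
    · rw [← ENNReal.ofReal_mul (exp_nonneg _), ← Real.exp_add]
      congr 2
      ring
    · rw [zero_mul]
  -- step 5 : integrate out Λ
  have haeS : ∀ᵐ t ∂(μ.map S), 0 ≤ t := (ae_map_iff hSm.aemeasurable measurableSet_Ici).mpr hSnn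
  have step5 : ∫⁻ w, Set.indicator {p : ℝ × ℝ | p.1 < p.2}
          (fun p => ENNReal.ofReal (Real.exp ((s - l1) * p.1))) w ∂((μ.map Λ).prod (μ.map S))
      = ∫⁻ t, ENNReal.ofReal ((l - l1) / (l - s) * (1 - Real.exp (-((l - s) * t)))) ∂(μ.map S) := by
    have hmeas' : Measurable fun w : ℝ × ℝ => Set.indicator {p : ℝ × ℝ | p.1 < p.2}
        (fun p => ENNReal.ofReal (Real.exp ((s - l1) * p.1))) w :=
      Measurable.indicator ((measurable_exp.comp (measurable_const.mul measurable_fst)).ennreal_ofReal)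
        (measurableSet_lt measurable_fst measurable_snd)
    rw [lintegral_prod_symm _ hmeas'.aemeasurable]
    apply lintegral_congr_ae (haeS.mono fun t ht => ?_)
    have hfa : ∀ a : ℝ, Set.indicator {p : ℝ × ℝ | p.1 < p.2}
        (fun p => ENNReal.ofReal (Real.exp ((s - l1) * p.1))) (a, t)
        = Set.indicator (Set.Iio t) (fun a => ENNReal.ofReal (Real.exp ((s - l1) * a))) a := by
      intro a
      simp only [Set.indicator_apply, Set.mem_setOf_eq, Set.mem_Iio]
    simp only [hfa]
    rw [lintegral_indicator measurableSet_Iio, hΛ,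
      expMeasure_lintegral_Iio hll1 (by linarith) ht]
    congr 3 <;> ring_nf
  -- step 6 : back to a real integral over S
  have hC : (0:ℝ) ≤ (l - l1) / (l - s) := div_nonneg hll1.le hls.le
  have hcont : Continuous fun t : ℝ => (l - l1) / (l - s) * (1 - Real.exp (-((l - s) * t))) := by
    continuity
  have hgInt : Integrable (fun t : ℝ => (l - l1) / (l - s) * (1 - Real.exp (-((l - s) * t))))
      (μ.map S) := by
    apply Integrable.mono' (integrable_const ((l - l1) / (l - s)))
      hcont.aestronglyMeasurable
    refine haeS.mono fun t ht => ?_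
    have h1 : Real.exp (-((l - s) * t)) ≤ 1 := exp_le_one_iff.mpr (by nlinarith)
    have h2 : (0:ℝ) ≤ 1 - Real.exp (-((l - s) * t)) := by linarith
    rw [Real.norm_eq_abs, abs_of_nonneg (mul_nonneg hC h2)]
    nlinarith [exp_pos (-((l - s) * t))]
  have hgnn : 0 ≤ᵐ[μ.map S] fun t : ℝ => (l - l1) / (l - s) * (1 - Real.exp (-((l - s) * t))) := by
    refine haeS.mono fun t ht => ?_
    have h1 : Real.exp (-((l - s) * t)) ≤ 1 := exp_le_one_iff.mpr (by nlinarith)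
    exact mul_nonneg hC (by linarith)
  have step6 : ∫⁻ t, ENNReal.ofReal ((l - l1) / (l - s) * (1 - Real.exp (-((l - s) * t)))) ∂(μ.map S)
      = ENNReal.ofReal (∫ t, (l - l1) / (l - s) * (1 - Real.exp (-((l - s) * t))) ∂(μ.map S)) :=
    (ofReal_integral_eq_lintegral_ofReal hgInt hgnn).symm
  -- step 7 : compute the S-integral
  have hexpInt : Integrable (fun ω => Real.exp (-(l - s) * S ω)) μ := by
    apply Integrable.mono' (integrable_const 1)
      (measurable_exp.comp (hSm.const_mul (-(l - s)))).aestronglyMeasurable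
    refine hSnn.mono fun ω hω => ?_
    simp only [Function.comp_apply, Real.norm_eq_abs, abs_exp]
    exact exp_le_one_iff.mpr (by nlinarith : -(l - s) * S ω ≤ 0)
  have step7 : ∫ t, (l - l1) / (l - s) * (1 - Real.exp (-((l - s) * t))) ∂(μ.map S)
      = (l - l1) / (l - s) * (1 - ∫ ω, Real.exp (-(l - s) * S ω) ∂μ) := by
    rw [integral_map hSm.aemeasurable hcont.aestronglyMeasurable]
    have harg : ∀ ω, -((l - s) * S ω) = -(l - s) * S ω := fun ω => by ring
    simp only [harg]
    rw [integral_const_mul, integral_sub (integrable_const 1) hexpInt, integral_const]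
    simp
  -- put everything together
  rw [step1, step2, step3, step4, step5, step6, step7, ENNReal.toReal_ofReal]
  have h1 : ∫ ω, Real.exp (-(l - s) * S ω) ∂μ ≤ 1 := by
    have := hSnn.mono fun ω hω => (exp_le_one_iff.mpr (by nlinarith : -(l - s) * S ω ≤ 0))
    calc ∫ ω, Real.exp (-(l - s) * S ω) ∂μ ≤ ∫ _ω, (1:ℝ) ∂μ := integral_mono_ae hexpInt (integrable_const 1) this
    _ = 1 := by simp
  exact mul_nonneg hC (by linarith)

/-- Conditional MGF of `Λ` given `{Λ < min(S, X)}`: for every `s < λ`,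
`E[e^{s Λ} | Λ < min(S, X)] = λ(1 - P_{λ-s}) / ((λ-s)(1 - P_λ))` where `P_x = E[e^{-x S}]`. -/
theorem stmt_5 {Ω : Type*} [MeasurableSpace Ω] (μ : Measure Ω) [IsProbabilityMeasure μ]
    (X Λ S : Ω → ℝ) (hXm : Measurable X) (hΛm : Measurable Λ) (hSm : Measurable S)
    (hSnn : ∀ᵐ ω ∂μ, 0 ≤ S ω) (hSpos : 0 < μ {ω | 0 < S ω})
    (l l1 : ℝ) (hl1 : 0 < l1) (hl : l1 < l)
    (hX : Measure.map X μ = expMeasure l1)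
    (hΛ : Measure.map Λ μ = expMeasure (l - l1))
    (hInd : iIndepFun ![X, Λ, S] μ)
    (P : ℝ → ℝ) (hP : ∀ x : ℝ, P x = ∫ ω, Real.exp (-x * S ω) ∂μ) :
    ∀ s : ℝ, s < l →
      (∫ ω in {ω | Λ ω < min (S ω) (X ω)}, Real.exp (s * Λ ω) ∂μ)
          / (μ {ω | Λ ω < min (S ω) (X ω)}).toReal
        = l * (1 - P (l - s)) / ((l - s) * (1 - P l)) := by
  intro s hs
  have hnum := key_lemma μ X Λ S hXm hΛm hSm hSnn l l1 hl1 hl hX hΛ hInd s hs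
  have hden0 := key_lemma μ X Λ S hXm hΛm hSm hSnn l l1 hl1 hl hX hΛ hInd 0 (by linarith)
  simp only [zero_mul, Real.exp_zero, sub_zero] at hden0
  have hden : (μ {ω | Λ ω < min (S ω) (X ω)}).toReal
      = (l - l1) / l * (1 - ∫ ω, Real.exp (-l * S ω) ∂μ) := by
    rw [← hden0, setIntegral_const]
    simp [Measure.real]
  rw [hnum, hden, hP (l - s), hP l]
  set a := 1 - ∫ ω, Real.exp (-(l - s) * S ω) ∂μ with ha
  set b := 1 - ∫ ω, Real.exp (-l * S ω) ∂μ with hb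
  by_cases hb0 : b = 0
  · rw [hb0, mul_zero, mul_zero, div_zero, div_zero]
  · have h1 : l ≠ 0 := by intro h; rw [h] at hl; linarith
    have h2 : l - s ≠ 0 := by linarith
    have h3 : l - l1 ≠ 0 := by linarith
    field_simp
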